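/- Let Ω be a cyclic group of order p-1 (p an odd prime) and fix 0 < r ≤ (p-1)/2. Let V and W be one-dimensional F_p-bar-modules over the algebra H_v generated by T_t (t∈Ω) and T_s with relations T_{t1}T_{t2}=T_{t1t2}, T_tT_s=T_sT_{t^{-1}}, T_s^2=-e_1T_s, where T_t acts on V by t^r and on W by t^s (identifying Ω with F_p^×), and T_s acts by 0 on both. If there exists a non-split extension of W by V of H_v-modules, then r + s ≡ p - 1 (mod p-1). -/

import Mathlib

/-! The finite pro-p Iwahori Hecke algebra of SL₂(𝔽_p) type, presented by generators
`T_t` (t ∈ Ω, a finite abelian group) and `T_s`, with relations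
`T_{t₁} * T_{t₂} = T_{t₁ t₂}`, `T_t * T_s = T_s * T_{t⁻¹}` and
`T_s ^ 2 = -e₁ * T_s` where `e₁ = ∑ t, T_t`. -/

noncomputable section

/-- An algebraic closure of `𝔽_p`. -/
abbrev Fbar (p : ℕ) [Fact p.Prime] : Type := AlgebraicClosure (ZMod p)

/-- The defining relations of the Hecke algebra. -/
inductive HeckeRel (p : ℕ) [Fact p.Prime] (Ω : Type) [CommGroup Ω] [Fintype Ω] :
    FreeAlgebra (Fbar p) (Ω ⊕ Unit) → FreeAlgebra (Fbar p) (Ω ⊕ Unit) → Prop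
  | mul (t₁ t₂ : Ω) : HeckeRel p Ω
      (FreeAlgebra.ι (Fbar p) (Sum.inl t₁) * FreeAlgebra.ι (Fbar p) (Sum.inl t₂))
      (FreeAlgebra.ι (Fbar p) (Sum.inl (t₁ * t₂)))
  | comm (t : Ω) : HeckeRel p Ω
      (FreeAlgebra.ι (Fbar p) (Sum.inl t) * FreeAlgebra.ι (Fbar p) (Sum.inr ()))
      (FreeAlgebra.ι (Fbar p) (Sum.inr ()) * FreeAlgebra.ι (Fbar p) (Sum.inl t⁻¹))
  | quad : HeckeRel p Ω
      (FreeAlgebra.ι (Fbar p) (Sum.inr ()) * FreeAlgebra.ι (Fbar p) (Sum.inr ()))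
      (-(∑ t : Ω, FreeAlgebra.ι (Fbar p) (Sum.inl t)) * FreeAlgebra.ι (Fbar p) (Sum.inr ()))

/-- The Hecke algebra `H`, as the quotient of the free algebra by the defining relations. -/
abbrev Hecke (p : ℕ) [Fact p.Prime] (Ω : Type) [CommGroup Ω] [Fintype Ω] : Type :=
  RingQuot (HeckeRel p Ω)

/-- The generator `T_t` of the Hecke algebra. -/
def HeckeT {p : ℕ} [Fact p.Prime] {Ω : Type} [CommGroup Ω] [Fintype Ω] (t : Ω) : Hecke p Ω :=
  RingQuot.mkAlgHom (Fbar p) (HeckeRel p Ω) (FreeAlgebra.ι (Fbar p) (Sum.inl t))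

/-- The generator `T_s` of the Hecke algebra. -/
def HeckeS {p : ℕ} [Fact p.Prime] {Ω : Type} [CommGroup Ω] [Fintype Ω] : Hecke p Ω :=
  RingQuot.mkAlgHom (Fbar p) (HeckeRel p Ω) (FreeAlgebra.ι (Fbar p) (Sum.inr ()))

section NSEAux

variable {p : ℕ} [Fact p.Prime] {Ω : Type} [CommGroup Ω] [Fintype Ω]

lemma heckeT_mul' (t₁ t₂ : Ω) :
    (HeckeT t₁ : Hecke p Ω) * HeckeT t₂ = HeckeT (t₁ * t₂) := by
  rw [HeckeT, HeckeT, HeckeT, ← map_mul]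
  exact RingQuot.mkAlgHom_rel (Fbar p) (HeckeRel.mul t₁ t₂)

lemma heckeT_heckeS' (t : Ω) :
    (HeckeT t : Hecke p Ω) * HeckeS = HeckeS * HeckeT t⁻¹ := by
  rw [HeckeT, HeckeT, HeckeS, ← map_mul, ← map_mul]
  exact RingQuot.mkAlgHom_rel (Fbar p) (HeckeRel.comm t)

lemma hecke_central_smul {M : Type} [AddCommGroup M] [Module (Hecke p Ω) M]
    (a : Fbar p) (h : Hecke p Ω) (x : M) :
    (algebraMap (Fbar p) (Hecke p Ω) a) • (h • x)
      = h • ((algebraMap (Fbar p) (Hecke p Ω) a) • x) := by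
  rw [← mul_smul, ← mul_smul, Algebra.commutes]

end NSEAux

/-- The character `t ↦ t^n` of `(ZMod p)ˣ` with values in `Fbar p`. -/
def NSEchi (p : ℕ) [Fact p.Prime] (n : ℕ) (t : (ZMod p)ˣ) : Fbar p :=
  algebraMap (ZMod p) (Fbar p) (t : ZMod p) ^ n

lemma NSEchi_apply (p : ℕ) [Fact p.Prime] (n : ℕ) (t : (ZMod p)ˣ) :
    NSEchi p n t = algebraMap (ZMod p) (Fbar p) (t : ZMod p) ^ n := rfl

lemma NSEchi_mul (p : ℕ) [Fact p.Prime] (n : ℕ) (t₁ t₂ : (ZMod p)ˣ) :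
    NSEchi p n (t₁ * t₂) = NSEchi p n t₁ * NSEchi p n t₂ := by
  simp [NSEchi, Units.val_mul, map_mul, mul_pow]

lemma NSEchi_inv_mul (p : ℕ) [Fact p.Prime] (n : ℕ) (t : (ZMod p)ˣ) :
    NSEchi p n t * NSEchi p n t⁻¹ = 1 := by
  rw [← NSEchi_mul, mul_inv_cancel]
  simp [NSEchi]

set_option maxHeartbeats 1600000 in
/-- if `V` and `W` are the one-dimensional `H_v`-modules on which `T_t`
acts by `t^r` resp. `t^s` (identifying `Ω` with `𝔽_p^×`) and `T_s` acts by `0`,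
and there is a non-split extension of `W` by `V`, then `r + s ≡ p - 1 (mod p-1)`. -/
theorem nonsplit_extension_characters (p : ℕ) [Fact p.Prime] (hp : Odd p)
    (r s : ℕ) (hr : 0 < r) (hr' : r ≤ (p - 1) / 2)
    (V W : Type) [AddCommGroup V] [AddCommGroup W]
    [Module (Hecke p (ZMod p)ˣ) V] [Module (Hecke p (ZMod p)ˣ) W]
    [Module (Fbar p) V] [IsScalarTower (Fbar p) (Hecke p (ZMod p)ˣ) V]
    [Module (Fbar p) W] [IsScalarTower (Fbar p) (Hecke p (ZMod p)ˣ) W]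
    (hVdim : Module.finrank (Fbar p) V = 1) (hWdim : Module.finrank (Fbar p) W = 1)
    (hVt : ∀ (t : (ZMod p)ˣ) (v : V),
      (HeckeT t : Hecke p (ZMod p)ˣ) • v = (algebraMap (ZMod p) (Fbar p) (t : ZMod p)) ^ r • v)
    (hVs : ∀ v : V, (HeckeS : Hecke p (ZMod p)ˣ) • v = 0)
    (hWt : ∀ (t : (ZMod p)ˣ) (w : W),
      (HeckeT t : Hecke p (ZMod p)ˣ) • w = (algebraMap (ZMod p) (Fbar p) (t : ZMod p)) ^ s • w)
    (hWs : ∀ w : W, (HeckeS : Hecke p (ZMod p)ˣ) • w = 0)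
    -- a non-split extension `0 → V → E → W → 0` of `H_v`-modules
    (E : Type) [AddCommGroup E] [Module (Hecke p (ZMod p)ˣ) E]
    (f : V →ₗ[Hecke p (ZMod p)ˣ] E) (g : E →ₗ[Hecke p (ZMod p)ˣ] W)
    (hf : Function.Injective f) (hg : Function.Surjective g)
    (hexact : LinearMap.range f = LinearMap.ker g)
    (hnonsplit : ¬ ∃ σ : W →ₗ[Hecke p (ZMod p)ˣ] E, g.comp σ = LinearMap.id) :
    r + s ≡ p - 1 [MOD p - 1] := by
    classical
  have hPrime : p.Prime := Fact.out
  obtain ⟨bW⟩ : Nonempty (Module.Basis Unit (Fbar p) W) := (finrank_eq_one_iff Unit).mp hWdim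
  set eW : W ≃ₗ[Fbar p] Fbar p :=
    bW.repr ≪≫ₗ Finsupp.LinearEquiv.finsuppUnique (Fbar p) (Fbar p) Unit with heW
  set w₀ : W := eW.symm 1 with hw₀def
  have hw0 : ∀ w : W, eW w • w₀ = w := by
    intro w
    rw [hw₀def, ← map_smul, smul_eq_mul, mul_one, LinearEquiv.symm_apply_apply]
  have hcw0 : eW w₀ = 1 := eW.apply_symm_apply 1
  set A : Hecke p (ZMod p)ˣ :=
    ∑ t : (ZMod p)ˣ, algebraMap (Fbar p) (Hecke p (ZMod p)ˣ) (NSEchi p s t) * HeckeT t⁻¹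
    with hA
  have TuA : ∀ u : (ZMod p)ˣ,
      HeckeT u * A = algebraMap (Fbar p) (Hecke p (ZMod p)ˣ) (NSEchi p s u) * A := by
    intro u
    rw [hA, Finset.mul_sum, Finset.mul_sum]
    refine Fintype.sum_equiv (Equiv.mulRight u⁻¹) _ _ fun t => ?_
    simp only [Equiv.coe_mulRight]
    have h1 : HeckeT u * (algebraMap (Fbar p) (Hecke p (ZMod p)ˣ) (NSEchi p s t) * HeckeT t⁻¹)
        = algebraMap (Fbar p) (Hecke p (ZMod p)ˣ) (NSEchi p s t) * HeckeT (u * t⁻¹) := by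
      rw [← mul_assoc, ← Algebra.commutes, mul_assoc, heckeT_mul']
    have h2 : algebraMap (Fbar p) (Hecke p (ZMod p)ˣ) (NSEchi p s u) *
          (algebraMap (Fbar p) (Hecke p (ZMod p)ˣ) (NSEchi p s (t * u⁻¹)) * HeckeT (t * u⁻¹)⁻¹)
        = algebraMap (Fbar p) (Hecke p (ZMod p)ˣ) (NSEchi p s t) * HeckeT (u * t⁻¹) := by
      rw [← mul_assoc, ← map_mul, ← NSEchi_mul]
      have e1 : u * (t * u⁻¹) = t := by
        rw [mul_comm t u⁻¹, ← mul_assoc, mul_inv_cancel, one_mul]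
      have e2 : (t * u⁻¹)⁻¹ = u * t⁻¹ := by
        rw [mul_inv_rev, inv_inv]
      rw [e1, e2]
    rw [h1, h2]
  obtain ⟨e₀, he₀⟩ := hg w₀
  set et : E := -(A • e₀) with het
  have Tu_et : ∀ u : (ZMod p)ˣ,
      (HeckeT u : Hecke p (ZMod p)ˣ) • et
        = algebraMap (Fbar p) (Hecke p (ZMod p)ˣ) (NSEchi p s u) • et := by
    intro u
    rw [het, smul_neg, smul_neg, ← mul_smul, ← mul_smul, TuA]
  have hcast : ((p - 1 : ℕ) : Fbar p) = -1 := by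
    have h1 : ((p : ℕ) : Fbar p) = 0 := by
      have h2 : ((p : ℕ) : Fbar p) = algebraMap (ZMod p) (Fbar p) ((p : ℕ) : ZMod p) :=
        (map_natCast _ p).symm
      rw [h2, ZMod.natCast_self, map_zero]
    rw [Nat.cast_sub hPrime.one_le, h1, Nat.cast_one, zero_sub]
  have g_et : g et = w₀ := by
    have hA_w : A • w₀ = -w₀ := by
      rw [hA, Finset.sum_smul]
      have hterm : ∀ t : (ZMod p)ˣ,
          (algebraMap (Fbar p) (Hecke p (ZMod p)ˣ) (NSEchi p s t) * HeckeT t⁻¹) • w₀ = w₀ := by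
        intro t
        rw [mul_smul, hWt t⁻¹ w₀, ← NSEchi_apply p s t⁻¹,
          algebraMap_smul (Hecke p (ZMod p)ˣ) (NSEchi p s t) (NSEchi p s t⁻¹ • w₀),
          smul_smul, NSEchi_inv_mul, one_smul]
      rw [Finset.sum_congr rfl fun t _ => hterm t, Finset.sum_const, Finset.card_univ,
          ZMod.card_units, ← Nat.cast_smul_eq_nsmul (Fbar p), hcast, neg_one_smul]
    rw [het, map_neg, map_smul, he₀, hA_w, neg_neg]
  set v₁ : E := (HeckeS : Hecke p (ZMod p)ˣ) • et with hv₁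
  have hv₁ker : v₁ ∈ LinearMap.ker g := by
    rw [LinearMap.mem_ker, hv₁, map_smul, g_et, hWs]
  obtain ⟨v', hv'⟩ : v₁ ∈ LinearMap.range f := by rw [hexact]; exact hv₁ker
  by_cases hzero : v' = 0
  · exfalso
    apply hnonsplit
    have hSet : (HeckeS : Hecke p (ZMod p)ˣ) • et = 0 := by rw [← hv₁, ← hv', hzero, map_zero]
    have key : ∀ h : Hecke p (ZMod p)ˣ,
        algebraMap (Fbar p) (Hecke p (ZMod p)ˣ) (eW (h • w₀)) • et = h • et := by
      intro h
      obtain ⟨x, rfl⟩ := RingQuot.mkAlgHom_surjective (Fbar p) (HeckeRel p (ZMod p)ˣ) h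
      induction x with
      | grade0 a =>
        rw [AlgHom.commutes, algebraMap_smul (Hecke p (ZMod p)ˣ) a w₀, map_smul,
          smul_eq_mul, hcw0, mul_one]
      | grade1 i =>
        rcases i with t | u
        · have hT : RingQuot.mkAlgHom (Fbar p) (HeckeRel p (ZMod p)ˣ)
              (FreeAlgebra.ι (Fbar p) (Sum.inl t)) = HeckeT t := rfl
          rw [hT, hWt t w₀, ← NSEchi_apply p s t, map_smul, smul_eq_mul, hcw0, mul_one, Tu_et]
        · have hS : RingQuot.mkAlgHom (Fbar p) (HeckeRel p (ZMod p)ˣ)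
              (FreeAlgebra.ι (Fbar p) (Sum.inr u)) = HeckeS := by cases u; rfl
          rw [hS, hWs w₀, map_zero, map_zero, zero_smul, hSet]
      | mul x y hx hy =>
        rw [map_mul]
        set h₁ := RingQuot.mkAlgHom (Fbar p) (HeckeRel p (ZMod p)ˣ) x with hh₁
        set h₂ := RingQuot.mkAlgHom (Fbar p) (HeckeRel p (ZMod p)ˣ) y with hh₂
        have e2 : h₂ • w₀ = algebraMap (Fbar p) (Hecke p (ZMod p)ˣ) (eW (h₂ • w₀)) • w₀ := by
          rw [algebraMap_smul (Hecke p (ZMod p)ˣ) (eW (h₂ • w₀)) w₀, hw0]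
        have e4 : eW ((h₁ * h₂) • w₀) = eW (h₂ • w₀) * eW (h₁ • w₀) := by
          conv_lhs => rw [mul_smul, e2, ← hecke_central_smul]
          rw [algebraMap_smul (Hecke p (ZMod p)ˣ) (eW (h₂ • w₀)) (h₁ • w₀), map_smul, smul_eq_mul]
        calc algebraMap (Fbar p) (Hecke p (ZMod p)ˣ) (eW ((h₁ * h₂) • w₀)) • et
            = algebraMap (Fbar p) (Hecke p (ZMod p)ˣ) (eW (h₂ • w₀)) •
                (algebraMap (Fbar p) (Hecke p (ZMod p)ˣ) (eW (h₁ • w₀)) • et) := by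
              rw [e4, map_mul, mul_smul]
          _ = algebraMap (Fbar p) (Hecke p (ZMod p)ˣ) (eW (h₂ • w₀)) • (h₁ • et) := by rw [hx]
          _ = h₁ • (algebraMap (Fbar p) (Hecke p (ZMod p)ˣ) (eW (h₂ • w₀)) • et) :=
              hecke_central_smul _ _ _
          _ = h₁ • (h₂ • et) := by rw [hy]
          _ = (h₁ * h₂) • et := (mul_smul _ _ _).symm
      | add x y hx hy =>
        rw [map_add]
        set h₁ := RingQuot.mkAlgHom (Fbar p) (HeckeRel p (ZMod p)ˣ) x with hh₁
        set h₂ := RingQuot.mkAlgHom (Fbar p) (HeckeRel p (ZMod p)ˣ) y with hh₂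
        calc algebraMap (Fbar p) (Hecke p (ZMod p)ˣ) (eW ((h₁ + h₂) • w₀)) • et
            = algebraMap (Fbar p) (Hecke p (ZMod p)ˣ) (eW (h₁ • w₀)) • et
              + algebraMap (Fbar p) (Hecke p (ZMod p)ˣ) (eW (h₂ • w₀)) • et := by
              rw [add_smul, map_add, map_add, add_smul]
          _ = h₁ • et + h₂ • et := by rw [hx, hy]
          _ = (h₁ + h₂) • et := (add_smul _ _ _).symm
    refine ⟨{ toFun := fun w => algebraMap (Fbar p) (Hecke p (ZMod p)ˣ) (eW w) • et,
              map_add' := ?_, map_smul' := ?_ }, ?_⟩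
    · intro x y
      simp only [map_add, add_smul]
    · intro h w
      simp only [RingHom.id_apply]
      have e2 : h • w = algebraMap (Fbar p) (Hecke p (ZMod p)ˣ) (eW w) • (h • w₀) := by
        conv_lhs => rw [← hw0 w, ← algebraMap_smul (Hecke p (ZMod p)ˣ) (eW w) w₀,
          ← hecke_central_smul]
      rw [e2, algebraMap_smul (Hecke p (ZMod p)ˣ) (eW w) (h • w₀), map_smul, smul_eq_mul,
        map_mul, mul_smul, key, hecke_central_smul]
    · apply LinearMap.ext
      intro w
      simp only [LinearMap.coe_comp, Function.comp_apply, LinearMap.coe_mk, AddHom.coe_mk,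
        LinearMap.id_coe, id_eq]
      rw [map_smul, g_et, algebraMap_smul (Hecke p (ZMod p)ˣ) (eW w) w₀, hw0]
  · have hrel : ∀ u : (ZMod p)ˣ,
        algebraMap (ZMod p) (Fbar p) (u : ZMod p) ^ r = NSEchi p s u⁻¹ := by
      intro u
      have h1 : (HeckeT u : Hecke p (ZMod p)ˣ) • v₁
          = algebraMap (Fbar p) (Hecke p (ZMod p)ˣ) (NSEchi p s u⁻¹) • v₁ := by
        rw [hv₁, ← mul_smul, heckeT_heckeS', mul_smul, Tu_et u⁻¹, ← hecke_central_smul]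
      have h2 : (HeckeT u : Hecke p (ZMod p)ˣ) • v₁ = algebraMap (Fbar p) (Hecke p (ZMod p)ˣ)
          (algebraMap (ZMod p) (Fbar p) (u : ZMod p) ^ r) • v₁ := by
        rw [← hv', ← map_smul, hVt u v',
          ← algebraMap_smul (Hecke p (ZMod p)ˣ) (algebraMap (ZMod p) (Fbar p) (u : ZMod p) ^ r) v',
          map_smul]
      have h3 : (algebraMap (ZMod p) (Fbar p) (u : ZMod p) ^ r) • v' = NSEchi p s u⁻¹ • v' := by
        apply hf
        rw [← algebraMap_smul (Hecke p (ZMod p)ˣ)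
            (algebraMap (ZMod p) (Fbar p) (u : ZMod p) ^ r) v',
          ← algebraMap_smul (Hecke p (ZMod p)ˣ) (NSEchi p s u⁻¹) v', map_smul, map_smul, hv',
          ← h2, h1]
      have h5 : (algebraMap (ZMod p) (Fbar p) (u : ZMod p) ^ r - NSEchi p s u⁻¹) • v' = 0 := by
        rw [sub_smul, h3, sub_self]
      rcases smul_eq_zero.mp h5 with h | h
      · exact sub_eq_zero.mp h
      · exact absurd h hzero
    have hpow : ∀ u : (ZMod p)ˣ, algebraMap (ZMod p) (Fbar p) (u : ZMod p) ^ (r + s) = 1 := by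
      intro u
      rw [pow_add, hrel u, ← NSEchi_apply p s u, mul_comm]
      exact NSEchi_inv_mul p s u
    obtain ⟨g₀, hg₀⟩ := IsCyclic.exists_generator (α := (ZMod p)ˣ)
    have hord : orderOf g₀ = p - 1 := by
      rw [orderOf_eq_card_of_forall_mem_zpowers hg₀, Nat.card_eq_fintype_card, ZMod.card_units]
    have hg1 : g₀ ^ (r + s) = 1 := by
      have h2 : ((g₀ : ZMod p)) ^ (r + s) = 1 := by
        apply (algebraMap (ZMod p) (Fbar p)).injective
        rw [map_pow, map_one]
        exact hpow g₀
      exact Units.ext (by rw [Units.val_pow_eq_pow_val, h2, Units.val_one])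
    have hdvd : (p - 1) ∣ (r + s) := hord ▸ orderOf_dvd_of_pow_eq_one hg1
    obtain ⟨k, hk⟩ := hdvd
    show (r + s) % (p - 1) = (p - 1) % (p - 1)
    rw [hk, Nat.mul_mod_right, Nat.mod_self]
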